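/- Let V be a nonzero rational Hodge structure of weight 4, polarized by a pairing ⟨·,·⟩, such that dim V^{3,1} = 1, V^{4,0} = 0, and V contains no nonzero rational (2,2)-classes (i.e., V^{2,2} ∩ V_Q = 0). Then V has no proper nonzero rational sub-Hodge structure: any sub-Hodge structure W ⊆ V satisfies W = 0 or W = V. (It suffices to prove the following linear-algebra version: if W ⊆ V is a sub-Hodge structure with W^{3,1} = 0 then W ⊆ V^{2,2} ∩ V_Q = 0, and if W^{3,1} = V^{3,1} then the orthogonal complement W^⊥ is a sub-Hodge structure with (W^⊥)^{3,1} = 0, hence W^⊥ = 0 and W = V.) -/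

import Mathlib

open TensorProduct

/-- Complex conjugation on `ℂ ⊗_ℚ V`, acting on the first factor. -/
noncomputable def hodgeConj (V : Type) [AddCommGroup V] [Module ℚ V] :
    (ℂ ⊗[ℚ] V) →ₗ[ℚ] (ℂ ⊗[ℚ] V) :=
  TensorProduct.map (Complex.conjAe.toLinearMap.restrictScalars ℚ) LinearMap.id

/-- The complexification of a rational subspace `W ⊆ V` inside `ℂ ⊗_ℚ V`. -/
noncomputable def complexify (V : Type) [AddCommGroup V] [Module ℚ V]
    (W : Submodule ℚ V) : Submodule ℂ (ℂ ⊗[ℚ] V) :=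
  Submodule.span ℂ ((fun v => (1 : ℂ) ⊗ₜ[ℚ] v) '' (W : Set V))

/-- `W` is a sub-Hodge structure for the decomposition `Vpq` (indexed by `p`, where
`Vpq p` stands for `V^{p,4-p}`): the complexification of `W` is the (direct) sum of
its intersections with the pieces `V^{p,q}`. -/
noncomputable def IsSubHodge (V : Type) [AddCommGroup V] [Module ℚ V]
    (Vpq : Fin 5 → Submodule ℂ (ℂ ⊗[ℚ] V)) (W : Submodule ℚ V) : Prop :=
  complexify V W = ⨆ p, complexify V W ⊓ Vpq p

section Aux

open Module

variable (V : Type) [AddCommGroup V] [Module ℚ V]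

lemma hodgeConj_tmul (z : ℂ) (v : V) :
    hodgeConj V (z ⊗ₜ[ℚ] v) = (starRingEnd ℂ z) ⊗ₜ[ℚ] v := rfl

lemma hodgeConj_smul (c : ℂ) (x : ℂ ⊗[ℚ] V) :
    hodgeConj V (c • x) = (starRingEnd ℂ c) • hodgeConj V x := by
  induction x using TensorProduct.induction_on with
  | zero => simp
  | tmul z v =>
      rw [TensorProduct.smul_tmul', hodgeConj_tmul, hodgeConj_tmul, TensorProduct.smul_tmul']
      simp [smul_eq_mul, map_mul]
  | add x y hx hy => rw [smul_add, map_add, hx, hy, map_add, smul_add]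

lemma hodgeConj_hodgeConj (x : ℂ ⊗[ℚ] V) : hodgeConj V (hodgeConj V x) = x := by
  induction x using TensorProduct.induction_on with
  | zero => simp
  | tmul z v => rw [hodgeConj_tmul, hodgeConj_tmul]; simp
  | add x y hx hy => rw [map_add, map_add, hx, hy]

lemma mem_complexify_of_mem {W : Submodule ℚ V} {w : V} (hw : w ∈ W) :
    (1 : ℂ) ⊗ₜ[ℚ] w ∈ complexify V W :=
  Submodule.subset_span ⟨w, hw, rfl⟩

lemma complexify_mono {A B : Submodule ℚ V} (h : A ≤ B) :
    complexify V A ≤ complexify V B :=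
  Submodule.span_mono (Set.image_mono h)

lemma complexify_bot : complexify V (⊥ : Submodule ℚ V) = ⊥ := by
  rw [complexify, eq_bot_iff, Submodule.span_le]
  rintro _ ⟨w, hw, rfl⟩
  simp only [SetLike.mem_coe, Submodule.mem_bot] at hw
  simp [hw]

lemma hodgeConj_mem_complexify {W : Submodule ℚ V} {x : ℂ ⊗[ℚ] V}
    (hx : x ∈ complexify V W) : hodgeConj V x ∈ complexify V W := by
  induction hx using Submodule.span_induction with
  | mem x hx =>
      obtain ⟨w, hw, rfl⟩ := hx
      rw [hodgeConj_tmul]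
      simpa using mem_complexify_of_mem V hw
  | zero => simp
  | add x y _ _ hx hy => rw [map_add]; exact Submodule.add_mem _ hx hy
  | smul c x _ hx => rw [hodgeConj_smul]; exact Submodule.smul_mem _ _ hx

lemma complexify_eq_range (W : Submodule ℚ V) :
    complexify V W = LinearMap.range (W.subtype.baseChange ℂ) := by
  apply le_antisymm
  · rw [complexify, Submodule.span_le]
    rintro _ ⟨w, hw, rfl⟩
    exact ⟨(1 : ℂ) ⊗ₜ[ℚ] (⟨w, hw⟩ : W), rfl⟩
  · rintro _ ⟨x, rfl⟩
    induction x using TensorProduct.induction_on with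
    | zero => simp
    | tmul z w =>
        have h : (W.subtype.baseChange ℂ) (z ⊗ₜ[ℚ] w) = z • ((1 : ℂ) ⊗ₜ[ℚ] (w : V)) := by
          rw [LinearMap.baseChange_tmul, TensorProduct.smul_tmul']
          simp
        rw [h]
        exact Submodule.smul_mem _ _ (Submodule.subset_span ⟨w, w.2, rfl⟩)
    | add x y hx hy => rw [map_add]; exact Submodule.add_mem _ hx hy

lemma finrank_complexify (W : Submodule ℚ V) [FiniteDimensional ℚ V] :
    finrank ℂ (complexify V W) = finrank ℚ W := by
  rw [complexify_eq_range]
  have hinj : Function.Injective (W.subtype.baseChange ℂ) := by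
    rw [LinearMap.baseChange_eq_ltensor]
    exact Module.Flat.lTensor_preserves_injective_linearMap _ W.injective_subtype
  rw [LinearMap.finrank_range_of_inj hinj, Module.finrank_baseChange]

lemma complexify_sup (A B : Submodule ℚ V) :
    complexify V (A ⊔ B) = complexify V A ⊔ complexify V B := by
  apply le_antisymm
  · rw [complexify, Submodule.span_le]
    rintro _ ⟨w, hw, rfl⟩
    obtain ⟨a, ha, b, hb, rfl⟩ := Submodule.mem_sup.mp hw
    show (1 : ℂ) ⊗ₜ[ℚ] (a + b) ∈ _
    rw [TensorProduct.tmul_add]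
    exact Submodule.add_mem _
      (Submodule.mem_sup_left (Submodule.subset_span ⟨a, ha, rfl⟩))
      (Submodule.mem_sup_right (Submodule.subset_span ⟨b, hb, rfl⟩))
  · exact sup_le (complexify_mono V le_sup_left) (complexify_mono V le_sup_right)

lemma complexify_inf (A B : Submodule ℚ V) [FiniteDimensional ℚ V] :
    complexify V (A ⊓ B) = complexify V A ⊓ complexify V B := by
  have h1 : complexify V (A ⊓ B) ≤ complexify V A ⊓ complexify V B :=
    le_inf (complexify_mono V inf_le_left) (complexify_mono V inf_le_right)
  refine Submodule.eq_of_le_of_finrank_le h1 ?_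
  have e1 := Submodule.finrank_sup_add_finrank_inf_eq (complexify V A) (complexify V B)
  have e2 := Submodule.finrank_sup_add_finrank_inf_eq A B
  rw [← complexify_sup] at e1
  rw [finrank_complexify, finrank_complexify, finrank_complexify] at e1
  have e3 := finrank_complexify V (A ⊓ B)
  omega

end Aux

open Module

/-- A nonzero polarized rational Hodge structure of weight 4 with `dim V^{3,1} = 1`,
`V^{4,0} = 0` and no nonzero rational `(2,2)`-classes has no proper nonzero rational
sub-Hodge structure. -/
theorem stmt_14 (V : Type) [AddCommGroup V] [Module ℚ V] [FiniteDimensional ℚ V]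
    [Nontrivial V]
    (Vpq : Fin 5 → Submodule ℂ (ℂ ⊗[ℚ] V))
    (hdecomp : DirectSum.IsInternal Vpq)
    (hconj : ∀ p : Fin 5, hodgeConj V '' (Vpq p : Set (ℂ ⊗[ℚ] V)) = (Vpq p.rev : Set (ℂ ⊗[ℚ] V)))
    (h31 : Module.finrank ℂ (Vpq 3) = 1)
    (h40 : Vpq 4 = ⊥)
    (h22 : ∀ v : V, ((1 : ℂ) ⊗ₜ[ℚ] v) ∈ Vpq 2 → v = 0)
    (B : LinearMap.BilinForm ℚ V) (hsymm : ∀ x y : V, B x y = B y x)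
    (hnd : B.Nondegenerate)
    (horth : ∀ W : Submodule ℚ V, IsSubHodge V Vpq W → IsSubHodge V Vpq (B.orthogonal W))
    (W : Submodule ℚ V) (hW : IsSubHodge V Vpq W) :
    W = ⊥ ∨ W = ⊤ := by
  classical
  by_cases hWbot : W = ⊥
  · exact Or.inl hWbot
  right
  by_contra hWtop
  -- conjugation moves pieces
  have hconjmem : ∀ (p : Fin 5) {x : ℂ ⊗[ℚ] V}, x ∈ Vpq p → hodgeConj V x ∈ Vpq p.rev := by
    intro p x hx
    have h := hconj p
    have hm : hodgeConj V x ∈ ⇑(hodgeConj V) '' (Vpq p : Set (ℂ ⊗[ℚ] V)) := ⟨x, hx, rfl⟩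
    rw [h] at hm
    exact hm
  have hVpq0 : Vpq 0 = ⊥ := by
    apply SetLike.coe_injective
    have := hconj 4
    rw [h40] at this
    have h4 : ((4 : Fin 5).rev) = (0 : Fin 5) := by decide
    rw [h4] at this
    rw [← this]
    ext y
    constructor
    · rintro ⟨x, hx, rfl⟩
      simp only [Submodule.bot_coe, Set.mem_singleton_iff] at hx
      simp [hx]
    · intro hy
      simp only [Submodule.bot_coe, Set.mem_singleton_iff] at hy
      exact ⟨0, by simp, by simp [hy]⟩
  -- Step A : a nonzero sub-Hodge structure contains Vpq 3 in its complexification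
  have stepA : ∀ (X : Submodule ℚ V), IsSubHodge V Vpq X → X ≠ ⊥ →
      Vpq 3 ≤ complexify V X := by
    intro X hX hne
    by_cases h3 : complexify V X ⊓ Vpq 3 = ⊥
    · exfalso
      have h1 : complexify V X ⊓ Vpq 1 = ⊥ := by
        rw [eq_bot_iff]
        rintro x ⟨hxc, hx1⟩
        have hσ3 : hodgeConj V x ∈ Vpq 3 := by
          have := hconjmem 1 hx1
          rwa [show ((1 : Fin 5).rev) = (3 : Fin 5) by decide] at this
        have hσc : hodgeConj V x ∈ complexify V X := hodgeConj_mem_complexify V hxc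
        have hz : hodgeConj V x = 0 := by
          rw [← Submodule.mem_bot (R := ℂ), ← h3]
          exact ⟨hσc, hσ3⟩
        have := congrArg (hodgeConj V) hz
        rw [hodgeConj_hodgeConj] at this
        simpa using this
      have hle2 : complexify V X ≤ Vpq 2 := by
        conv_lhs => rw [hX]
        apply iSup_le
        intro p
        fin_cases p
        · show complexify V X ⊓ Vpq 0 ≤ Vpq 2
          rw [hVpq0, inf_bot_eq]; exact bot_le
        · show complexify V X ⊓ Vpq 1 ≤ Vpq 2
          rw [h1]; exact bot_le
        · exact inf_le_right
        · show complexify V X ⊓ Vpq 3 ≤ Vpq 2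
          rw [h3]; exact bot_le
        · show complexify V X ⊓ Vpq 4 ≤ Vpq 2
          rw [h40, inf_bot_eq]; exact bot_le
      apply hne
      rw [eq_bot_iff]
      intro w hw
      have := h22 w (hle2 (mem_complexify_of_mem V hw))
      simp [this]
    · have hfin : finrank ℂ (Vpq 3) ≤ finrank ℂ (complexify V X ⊓ Vpq 3 :
          Submodule ℂ (ℂ ⊗[ℚ] V)) := by
        rw [h31]
        have : finrank ℂ (complexify V X ⊓ Vpq 3 : Submodule ℂ (ℂ ⊗[ℚ] V)) ≠ 0 := by
          intro h0
          exact h3 (Submodule.finrank_eq_zero.mp h0)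
        omega
      have heq := Submodule.eq_of_le_of_finrank_le (inf_le_right :
        complexify V X ⊓ Vpq 3 ≤ Vpq 3) hfin
      rw [← heq]
      exact inf_le_left
  -- conj transfer : Vpq 3 ≤ cX implies Vpq 1 ≤ cX
  have h1of3 : ∀ (X : Submodule ℚ V), Vpq 3 ≤ complexify V X → Vpq 1 ≤ complexify V X := by
    intro X h3 x hx
    have hσx : hodgeConj V x ∈ Vpq 3 := by
      have := hconjmem 1 hx
      rwa [show ((1 : Fin 5).rev) = (3 : Fin 5) by decide] at this
    have := hodgeConj_mem_complexify V (h3 hσx)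
    rwa [hodgeConj_hodgeConj] at this
  -- Step B : any rational subspace whose complexification contains Vpq 3 is sub-Hodge
  have stepB : ∀ (X : Submodule ℚ V), Vpq 3 ≤ complexify V X → IsSubHodge V Vpq X := by
    intro X h3
    have h1 := h1of3 X h3
    apply le_antisymm ?_ (iSup_le fun p => inf_le_left)
    have htop : Vpq 1 ⊔ (Vpq 2 ⊔ Vpq 3) = ⊤ := by
      apply le_antisymm le_top
      rw [← hdecomp.submodule_iSup_eq_top]
      apply iSup_le
      intro p
      fin_cases p
      · show Vpq 0 ≤ _
        rw [hVpq0]; exact bot_le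
      · exact le_sup_left
      · exact le_sup_of_le_right le_sup_left
      · exact le_sup_of_le_right le_sup_right
      · show Vpq 4 ≤ _
        rw [h40]; exact bot_le
    intro x hx
    have hxtop : x ∈ Vpq 1 ⊔ (Vpq 2 ⊔ Vpq 3) := htop ▸ Submodule.mem_top
    obtain ⟨x1, hx1, y, hy, rfl⟩ := Submodule.mem_sup.mp hxtop
    obtain ⟨x2, hx2, x3, hx3, rfl⟩ := Submodule.mem_sup.mp hy
    have hx1c : x1 ∈ complexify V X := h1 hx1
    have hx3c : x3 ∈ complexify V X := h3 hx3
    have hx2c : x2 ∈ complexify V X := by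
      have h := Submodule.sub_mem _ (Submodule.sub_mem _ hx hx1c) hx3c
      have he : x1 + (x2 + x3) - x1 - x3 = x2 := by abel
      rwa [he] at h
    refine Submodule.add_mem _ ?_ (Submodule.add_mem _ ?_ ?_)
    · exact Submodule.mem_iSup_of_mem 1 ⟨hx1c, hx1⟩
    · exact Submodule.mem_iSup_of_mem 2 ⟨hx2c, hx2⟩
    · exact Submodule.mem_iSup_of_mem 3 ⟨hx3c, hx3⟩
  -- bilinear form facts
  have hrefl : B.IsRefl := fun x y h => by rw [hsymm]; exact h
  have horthne : ∀ (X : Submodule ℚ V), X ≠ ⊤ → B.orthogonal X ≠ ⊥ := by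
    intro X hX h
    have hf := LinearMap.BilinForm.finrank_orthogonal hnd X
    rw [h, finrank_bot] at hf
    have hlt : finrank ℚ X < finrank ℚ V := Submodule.finrank_lt hX
    omega
  -- W contains Vpq 3 in its complexification, and has dimension ≥ 2
  have h3W : Vpq 3 ≤ complexify V W := stepA W hW hWbot
  have hV1ne : Vpq 1 ≠ ⊥ := by
    intro h
    have h3ne : Vpq 3 ≠ ⊥ := by
      intro h'
      rw [h', finrank_bot] at h31
      omega
    obtain ⟨x, hx, hxne⟩ := Submodule.exists_mem_ne_zero_of_ne_bot h3ne
    have : hodgeConj V x ∈ Vpq 1 := by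
      have := hconjmem 3 hx
      rwa [show ((3 : Fin 5).rev) = (1 : Fin 5) by decide] at this
    rw [h, Submodule.mem_bot] at this
    apply hxne
    have := congrArg (hodgeConj V) this
    rw [hodgeConj_hodgeConj] at this
    simpa using this
  have hdisj : Vpq 3 ⊓ Vpq 1 = ⊥ := by
    have := hdecomp.submodule_iSupIndep
    exact (this.pairwiseDisjoint (by decide : (3 : Fin 5) ≠ 1)).eq_bot
  have hdim2 : ∀ (X : Submodule ℚ V), Vpq 3 ≤ complexify V X → 2 ≤ finrank ℚ X := by
    intro X h3
    have h1 := h1of3 X h3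
    have hle : Vpq 3 ⊔ Vpq 1 ≤ complexify V X := sup_le h3 h1
    have hfsup : finrank ℂ (Vpq 3 ⊔ Vpq 1 : Submodule ℂ (ℂ ⊗[ℚ] V)) =
        finrank ℂ (Vpq 3) + finrank ℂ (Vpq 1) := by
      have := Submodule.finrank_sup_add_finrank_inf_eq (Vpq 3) (Vpq 1)
      rw [hdisj, finrank_bot] at this
      omega
    have hf1 : 1 ≤ finrank ℂ (Vpq 1) := by
      have : finrank ℂ (Vpq 1) ≠ 0 := fun h0 => hV1ne (Submodule.finrank_eq_zero.mp h0)
      omega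
    have hmono : finrank ℂ (Vpq 3 ⊔ Vpq 1 : Submodule ℂ (ℂ ⊗[ℚ] V)) ≤
        finrank ℂ (complexify V X) := Submodule.finrank_mono hle
    rw [finrank_complexify] at hmono
    omega
  -- choose W0 : nonzero, Vpq 3 ≤ c W0, codimension ≥ 2
  obtain ⟨W0, hW0ne, hW0c, hW0dim⟩ :
      ∃ W0 : Submodule ℚ V, W0 ≠ ⊥ ∧ Vpq 3 ≤ complexify V W0 ∧
        finrank ℚ W0 + 2 ≤ finrank ℚ V := by
    by_cases hcod : finrank ℚ W + 2 ≤ finrank ℚ V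
    · exact ⟨W, hWbot, h3W, hcod⟩
    · have hone : B.orthogonal W ≠ ⊥ := horthne W hWtop
      refine ⟨B.orthogonal W, hone, stepA _ (horth W hW) hone, ?_⟩
      have hf := LinearMap.BilinForm.finrank_orthogonal hnd W
      have hlt : finrank ℚ W < finrank ℚ V := Submodule.finrank_lt hWtop
      have := hdim2 W h3W
      omega
  -- construct two proper subspaces above W0 whose sup is everything
  obtain ⟨x, hx⟩ : ∃ x : V, x ∉ W0 := by
    by_contra h
    push_neg at h
    have : W0 = ⊤ := Submodule.eq_top_iff'.mpr h
    rw [this, finrank_top] at hW0dim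
    omega
  have hxne : x ≠ 0 := fun h => hx (h ▸ W0.zero_mem)
  set W2 : Submodule ℚ V := W0 ⊔ Submodule.span ℚ {x} with hW2def
  obtain ⟨D, hD⟩ := Submodule.exists_isCompl W2
  set W1 : Submodule ℚ V := W0 ⊔ D with hW1def
  have hinfspan : W0 ⊓ Submodule.span ℚ {x} = ⊥ := by
    rw [eq_bot_iff]
    rintro y ⟨hyW, hyS⟩
    obtain ⟨c, rfl⟩ := Submodule.mem_span_singleton.mp hyS
    rcases eq_or_ne c 0 with rfl | hc
    · simp
    · exfalso
      apply hx
      have : c⁻¹ • (c • x) ∈ W0 := W0.smul_mem _ hyW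
      rwa [smul_smul, inv_mul_cancel₀ hc, one_smul] at this
  have hfW2 : finrank ℚ W2 = finrank ℚ W0 + 1 := by
    have h := Submodule.finrank_sup_add_finrank_inf_eq W0 (Submodule.span ℚ {x})
    rw [hinfspan, finrank_bot, finrank_span_singleton hxne, ← hW2def] at h
    omega
  have hW2top : W2 ≠ ⊤ := by
    intro h
    rw [h, finrank_top] at hfW2
    omega
  have hfD : finrank ℚ W2 + finrank ℚ D = finrank ℚ V :=
    Submodule.finrank_add_eq_of_isCompl hD
  have hW1top : W1 ≠ ⊤ := by
    intro h
    have hle : finrank ℚ (W0 ⊔ D : Submodule ℚ V) ≤ finrank ℚ W0 + finrank ℚ D := by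
      have := Submodule.finrank_sup_add_finrank_inf_eq W0 D
      omega
    rw [← hW1def, h, finrank_top] at hle
    omega
  have hsup : W1 ⊔ W2 = ⊤ := by
    apply le_antisymm le_top
    rw [← hD.codisjoint.eq_top]
    apply sup_le
    · exact le_sup_right
    · exact le_trans (le_sup_right : D ≤ W0 ⊔ D) (le_sup_left : W1 ≤ W1 ⊔ W2)
  -- orthogonals of W1, W2 contain Vpq 3 in their complexification
  have key : ∀ (X : Submodule ℚ V), W0 ≤ X → X ≠ ⊤ →
      Vpq 3 ≤ complexify V (B.orthogonal X) := by
    intro X hle hX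
    have hXsub : IsSubHodge V Vpq X :=
      stepB X (le_trans hW0c (complexify_mono V hle))
    exact stepA _ (horth X hXsub) (horthne X hX)
  have k1 := key W1 le_sup_left hW1top
  have k2 := key W2 le_sup_left hW2top
  have hoinf : B.orthogonal W1 ⊓ B.orthogonal W2 = ⊥ := by
    have heq : B.orthogonal (W1 ⊔ W2) = B.orthogonal W1 ⊓ B.orthogonal W2 := by
      apply le_antisymm
      · exact le_inf (B.orthogonal_le le_sup_left) (B.orthogonal_le le_sup_right)
      · rintro y ⟨hy1, hy2⟩
        intro w hw
        obtain ⟨a, ha, b, hb, rfl⟩ := Submodule.mem_sup.mp hw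
        have := hy1 a ha
        have := hy2 b hb
        show B (a + b) y = 0
        rw [map_add, LinearMap.add_apply, hy1 a ha, hy2 b hb, add_zero]
    rw [← heq, hsup, B.orthogonal_top_eq_bot hnd]
  have hfinal : Vpq 3 ≤ ⊥ := by
    have h := le_inf k1 k2
    rw [← complexify_inf, hoinf, complexify_bot] at h
    exact h
  rw [le_bot_iff] at hfinal
  rw [hfinal, finrank_bot] at h31
  omega
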